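/- arXiv:1601.06103 — 4 statements merged into one kernel-verified Lean document; each statement's English description precedes it below -/
import Mathlib

section
/- Let S be a finite set, let ℓ₁, ℓ₂ : S → (0,∞) be two probability mass functions on S, and let ν₁, ν₂ > 0 with ν₁ + ν₂ = 1. Define S¹ = {s ∈ S : ℓ₁(s)·ν₁ ≥ ℓ₂(s)·ν₂} and S⁻¹ = S \ S¹. If both S¹ and S⁻¹ are nonempty, then (∑_{s∈S¹} ℓ₁(s) / ∑_{s∈S¹} ℓ₂(s)) · (∑_{s∈S⁻¹} ℓ₂(s) / ∑_{s∈S⁻¹} ℓ₁(s)) ≥ 1; equivalently, the 'weight' w := log of this product is nonnegative. -/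
open Finset

theorem weight_nonneg
    {S : Type*} [Fintype S] [DecidableEq S]
    (ℓ₁ ℓ₂ : S → ℝ)
    (hℓ₁pos : ∀ s, 0 < ℓ₁ s) (hℓ₂pos : ∀ s, 0 < ℓ₂ s)
    (hℓ₁sum : ∑ s, ℓ₁ s = 1) (hℓ₂sum : ∑ s, ℓ₂ s = 1)
    (ν₁ ν₂ : ℝ) (hν₁ : 0 < ν₁) (hν₂ : 0 < ν₂) (hν : ν₁ + ν₂ = 1)
    (S1 Sm1 : Finset S)
    (hS1 : ∀ s, s ∈ S1 ↔ ℓ₂ s * ν₂ ≤ ℓ₁ s * ν₁)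
    (hSm1 : Sm1 = Finset.univ \ S1)
    (hS1ne : S1.Nonempty) (hSm1ne : Sm1.Nonempty) :
    1 ≤ ((∑ s ∈ S1, ℓ₁ s) / (∑ s ∈ S1, ℓ₂ s)) *
        ((∑ s ∈ Sm1, ℓ₂ s) / (∑ s ∈ Sm1, ℓ₁ s)) ∧
    0 ≤ Real.log (((∑ s ∈ S1, ℓ₁ s) / (∑ s ∈ S1, ℓ₂ s)) *
        ((∑ s ∈ Sm1, ℓ₂ s) / (∑ s ∈ Sm1, ℓ₁ s))) := by
  set A := ∑ s ∈ S1, ℓ₁ s with hA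
  set B := ∑ s ∈ S1, ℓ₂ s with hB
  set C := ∑ s ∈ Sm1, ℓ₂ s with hC
  set D := ∑ s ∈ Sm1, ℓ₁ s with hD
  have hApos : 0 < A := Finset.sum_pos (fun s _ => hℓ₁pos s) hS1ne
  have hBpos : 0 < B := Finset.sum_pos (fun s _ => hℓ₂pos s) hS1ne
  have hCpos : 0 < C := Finset.sum_pos (fun s _ => hℓ₂pos s) hSm1ne
  have hDpos : 0 < D := Finset.sum_pos (fun s _ => hℓ₁pos s) hSm1ne
  have h1 : B * ν₂ ≤ A * ν₁ := by
    rw [hA, hB, Finset.sum_mul, Finset.sum_mul]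
    exact Finset.sum_le_sum fun s hs => (hS1 s).mp hs
  have h2 : D * ν₁ ≤ C * ν₂ := by
    rw [hC, hD, Finset.sum_mul, Finset.sum_mul]
    refine Finset.sum_le_sum fun s hs => le_of_lt ?_
    have : s ∉ S1 := by rw [hSm1] at hs; exact (Finset.mem_sdiff.mp hs).2
    have := (hS1 s).not.mp this
    linarith [not_le.mp this]
  have hmain : 1 ≤ (A / B) * (C / D) := by
    rw [div_mul_div_comm, le_div_iff₀ (by positivity), one_mul]
    nlinarith [mul_le_mul h1 h2 (by positivity) (by positivity)]
  exact ⟨hmain, Real.log_nonneg hmain⟩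
end

section
/- Let Θ be a finite set, θ ∈ Θ, S a finite signal set, ℓ(·|θ̂) strictly positive likelihoods, ν a full-support prior, and let (s_t)_{t≥0} be i.i.d. with law ℓ(·|θ). If D_KL(ℓ(·|θ) ‖ ℓ(·|θ̌)) > 0 for every θ̌ ≠ θ, then the Bayesian posterior μ_t formed from ν and the signals s_0,…,s_t satisfies μ_t(θ) → 1 almost surely as t → ∞. -/
open Finset Filter MeasureTheory ProbabilityTheory

/-- Consistency of single-agent Bayesian learning with i.i.d. signals: if
every false state is distinguishable from the truth (positive KL divergence),
then the Bayesian posterior concentrates on the truth almost surely. -/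
theorem single_agent_bayesian_learning
    {Θ : Type*} [Fintype Θ] {S : Type*} [Fintype S] [MeasurableSpace S]
    [MeasurableSingletonClass S]
    (θ : Θ) (ℓ : S → Θ → ℝ) (hℓ : ∀ s θh, 0 < ℓ s θh)
    (hℓsum : ∀ θh, ∑ s, ℓ s θh = 1)
    (ν : Θ → ℝ) (hν : ∀ θh, 0 < ν θh) (hνsum : ∑ θh, ν θh = 1)
    {Ω : Type*} [MeasurableSpace Ω] (P : Measure Ω) [IsProbabilityMeasure P]
    (s : ℕ → Ω → S) (hmeas : ∀ t, Measurable (s t))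
    (hindep : iIndepFun s P)
    (hlaw : ∀ (t : ℕ) (x : S), P (s t ⁻¹' {x}) = ENNReal.ofReal (ℓ x θ))
    (μ : ℕ → Ω → Θ → ℝ)
    (h0 : ∀ ω θh, μ 0 ω θh = ν θh * ℓ (s 0 ω) θh / ∑ θt, ν θt * ℓ (s 0 ω) θt)
    (hstep : ∀ t ω θh, μ (t + 1) ω θh =
      μ t ω θh * ℓ (s (t + 1) ω) θh / ∑ θt, μ t ω θt * ℓ (s (t + 1) ω) θt)
    (hKL : ∀ θc, θc ≠ θ → 0 < ∑ x, ℓ x θ * Real.log (ℓ x θ / ℓ x θc)) :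
    ∀ᵐ ω ∂P, Tendsto (fun t => μ t ω θ) atTop (nhds 1) := by
  classical
  set Lf : ℕ → Ω → Θ → ℝ := fun t ω θh => ν θh * ∏ k ∈ Finset.range (t + 1), ℓ (s k ω) θh
    with hLf
  have hLpos : ∀ t ω θh, 0 < Lf t ω θh := fun t ω θh =>
    mul_pos (hν θh) (Finset.prod_pos fun k _ => hℓ _ _)
  have hDpos : ∀ t ω, 0 < ∑ θt, Lf t ω θt := fun t ω =>
    Finset.sum_pos (fun θt _ => hLpos t ω θt) ⟨θ, Finset.mem_univ θ⟩
  have hclosed : ∀ t ω θh, μ t ω θh = Lf t ω θh / ∑ θt, Lf t ω θt := by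
    intro t
    induction t with
    | zero =>
      intro ω θh
      simpa [Lf] using h0 ω θh
    | succ t ih =>
      intro ω θh
      have hstepL : ∀ θt, Lf t ω θt * ℓ (s (t + 1) ω) θt = Lf (t + 1) ω θt := by
        intro θt
        simp [Lf, Finset.prod_range_succ, mul_assoc]
      rw [hstep]
      simp only [ih, div_mul_eq_mul_div, ← Finset.sum_div, hstepL]
      rw [div_div_div_cancel_right₀ (hDpos t ω).ne']
  have key : ∀ᵐ ω ∂P, ∀ θc, θc ≠ θ →
      Tendsto (fun t => ∏ k ∈ Finset.range (t + 1), (ℓ (s k ω) θc / ℓ (s k ω) θ))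
        atTop (nhds 0) := by
    rw [ae_all_iff]
    intro θc
    rcases eq_or_ne θc θ with hc | hc
    · filter_upwards with ω hne; exact absurd hc hne
    set f : S → ℝ := fun x => Real.log (ℓ x θc / ℓ x θ) with hf
    have hfm : Measurable f := measurable_of_countable f
    have hmap : ∀ i, Measure.map (s i) P = Measure.map (s 0) P := by
      intro i
      refine Measure.ext_of_singleton fun x => ?_
      rw [Measure.map_apply (hmeas i) (measurableSet_singleton x),
          Measure.map_apply (hmeas 0) (measurableSet_singleton x), hlaw, hlaw]
    have hident : ∀ i, IdentDistrib (fun ω => f (s i ω)) (fun ω => f (s 0 ω)) P P :=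
      fun i => IdentDistrib.comp ⟨(hmeas i).aemeasurable, (hmeas 0).aemeasurable, hmap i⟩ hfm
    have hpind : Pairwise (Function.onFun (IndepFun · · P) fun i => fun ω => f (s i ω)) :=
      fun i j hij => (hindep.indepFun hij).comp hfm hfm
    haveI : IsProbabilityMeasure (Measure.map (s 0) P) :=
      Measure.isProbabilityMeasure_map (hmeas 0).aemeasurable
    have hintf : Integrable f (Measure.map (s 0) P) := .of_finite
    have hint : Integrable (fun ω => f (s 0 ω)) P :=
      (integrable_map_measure hfm.aestronglyMeasurable (hmeas 0).aemeasurable).mp hintf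
    have hE : ∫ ω, f (s 0 ω) ∂P = ∑ x, ℓ x θ * f x := by
      rw [← integral_map (hmeas 0).aemeasurable hfm.aestronglyMeasurable,
          integral_fintype hintf]
      refine Finset.sum_congr rfl fun x _ => ?_
      rw [measureReal_def, Measure.map_apply (hmeas 0) (measurableSet_singleton x), hlaw,
          ENNReal.toReal_ofReal (hℓ x θ).le, smul_eq_mul]
    have hEneg : ∑ x, ℓ x θ * f x < 0 := by
      have h1 : ∑ x, ℓ x θ * f x = -∑ x, ℓ x θ * Real.log (ℓ x θ / ℓ x θc) := by
        rw [← Finset.sum_neg_distrib]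
        refine Finset.sum_congr rfl fun x _ => ?_
        simp only [hf]
        rw [Real.log_div (hℓ x θc).ne' (hℓ x θ).ne', Real.log_div (hℓ x θ).ne' (hℓ x θc).ne']
        ring
      rw [h1]
      exact neg_lt_zero.mpr (hKL θc hc)
    have hslln := strong_law_ae_real (fun i => fun ω => f (s i ω)) hint hpind hident
    filter_upwards [hslln] with ω hω hne
    rw [hE] at hω
    set E := ∑ x, ℓ x θ * f x with hEdef
    have hsum : Tendsto (fun n => ∑ i ∈ Finset.range n, f (s i ω)) atTop atBot := by
      have hhalf : E < E / 2 := by linarith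
      have hev : ∀ᶠ n : ℕ in atTop, (∑ i ∈ Finset.range n, f (s i ω)) / n < E / 2 :=
        hω.eventually_lt_const hhalf
      have hev2 : ∀ᶠ n : ℕ in atTop, (∑ i ∈ Finset.range n, f (s i ω)) ≤ E / 2 * n := by
        filter_upwards [hev, eventually_ge_atTop 1] with n hn hn1
        have hnpos : (0 : ℝ) < n := by exact_mod_cast hn1
        have := (div_lt_iff₀ hnpos).mp hn
        linarith
      have hlin : Tendsto (fun n : ℕ => E / 2 * (n : ℝ)) atTop atBot :=
        Tendsto.const_mul_atTop_of_neg (by linarith) tendsto_natCast_atTop_atTop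
      exact tendsto_atBot_mono' atTop hev2 hlin
    have hexp : Tendsto (fun n => Real.exp (∑ i ∈ Finset.range n, f (s i ω)))
        atTop (nhds 0) := Real.tendsto_exp_atBot.comp hsum
    have hshift := hexp.comp (tendsto_add_atTop_nat 1)
    refine hshift.congr fun t => ?_
    show Real.exp (∑ i ∈ Finset.range (t + 1), f (s i ω))
        = ∏ k ∈ Finset.range (t + 1), (ℓ (s k ω) θc / ℓ (s k ω) θ)
    rw [Real.exp_sum]
    exact Finset.prod_congr rfl fun k _ => Real.exp_log (div_pos (hℓ _ _) (hℓ _ _))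
  filter_upwards [key] with ω hω
  have hLθ : ∀ t, Lf t ω θ ≠ 0 := fun t => (hLpos t ω θ).ne'
  set T : ℕ → ℝ := fun t => ∑ θc ∈ Finset.univ.erase θ,
    (ν θc / ν θ) * ∏ k ∈ Finset.range (t + 1), (ℓ (s k ω) θc / ℓ (s k ω) θ) with hT
  have hrepr : ∀ t, μ t ω θ = 1 / (1 + T t) := by
    intro t
    rw [hclosed t ω θ]
    have hsplit : (∑ θt, Lf t ω θt) = Lf t ω θ * (1 + T t) := by
      rw [mul_add, mul_one, hT, Finset.mul_sum,
        ← Finset.add_sum_erase _ _ (Finset.mem_univ θ)]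
      congr 1
      refine Finset.sum_congr rfl fun θc _ => ?_
      have hp : (∏ k ∈ Finset.range (t + 1), ℓ (s k ω) θ) ≠ 0 :=
        (Finset.prod_pos fun k _ => hℓ _ _).ne'
      simp only [Lf]
      rw [Finset.prod_div_distrib, div_mul_div_comm,
        mul_comm (ν θ * ∏ k ∈ Finset.range (t + 1), ℓ (s k ω) θ),
        div_mul_cancel₀ _ (mul_ne_zero (hν θ).ne' hp)]
    rw [hsplit, div_mul_cancel_left₀ (hLθ t), one_div]
  have hTlim : Tendsto T atTop (nhds 0) := by
    have h := tendsto_finset_sum (Finset.univ.erase θ)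
      (fun θc hc => ((hω θc (Finset.mem_erase.mp hc).1).const_mul (ν θc / ν θ) :))
    have h0' : (∑ θc ∈ Finset.univ.erase θ, (ν θc / ν θ) * (0 : ℝ)) = 0 := by simp
    rw [h0'] at h
    exact h
  have hmain : Tendsto (fun t => 1 / (1 + T t)) atTop (nhds 1) := by
    have h1 : Tendsto (fun t => 1 + T t) atTop (nhds 1) := by
      simpa using (tendsto_const_nhds (x := (1 : ℝ))).add hTlim
    have h2 : Tendsto (fun t => 1 / (1 + T t)) atTop (nhds (1 / 1)) :=
      tendsto_const_nhds.div h1 one_ne_zero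
    simpa using h2
  exact hmain.congr fun t => (hrepr t).symm
end

section
/- In the directed-cycle setting above, if the truth is globally identifiable, i.e., ∑_{j=1}^n D_KL(ℓ_j(·|θ)‖ℓ_j(·|θ̌)) > 0 for every θ̌ ≠ θ, then every agent learns the truth: μ_{i,t}(θ) → 1 almost surely as t → ∞ for all i, even if no single agent can identify θ from her own signals (i.e., even if D_KL(ℓ_i(·|θ)‖ℓ_i(·|θ̌)) = 0 for some i, θ̌). -/
open Finset Filter MeasureTheory ProbabilityTheory
open Fin.NatCast Fin.CommRing

lemma aux_sum_range_mul (g : ℕ → ℝ) (n m : ℕ) :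
    ∑ k ∈ Finset.range (m * n), g k
      = ∑ d ∈ Finset.range n, ∑ b ∈ Finset.range m, g (b * n + d) := by
  rw [Finset.sum_comm]
  induction m with
  | zero => simp
  | succ m ih =>
      rw [Finset.sum_range_succ, ← ih, Nat.succ_mul, Finset.sum_range_add]

lemma aux_tendsto_residues {n : ℕ} (hn : 0 < n) {u : ℕ → ℝ} {L : ℝ}
    (h : ∀ r : Fin n, Tendsto (fun m => u (m * n + (r : ℕ))) atTop (nhds L)) :
    Tendsto u atTop (nhds L) := by
  rw [Metric.tendsto_atTop]
  intro ε hε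
  have h' : ∀ r : Fin n, ∃ N, ∀ m ≥ N, dist (u (m * n + (r : ℕ))) L < ε :=
    fun r => Metric.tendsto_atTop.mp (h r) ε hε
  choose N hN using h'
  refine ⟨(Finset.univ.sup N + 1) * n, fun t ht => ?_⟩
  have hr : t % n < n := Nat.mod_lt _ hn
  have ht' : t = (t / n) * n + ((⟨t % n, hr⟩ : Fin n) : ℕ) := by
    simpa [mul_comm] using (Nat.div_add_mod t n).symm
  rw [ht']
  apply hN
  calc N ⟨t % n, hr⟩ ≤ Finset.univ.sup N := Finset.le_sup (Finset.mem_univ _)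
    _ ≤ Finset.univ.sup N + 1 := Nat.le_succ _
    _ ≤ t / n := (Nat.le_div_iff_mul_le hn).mpr ht

lemma aux_slln {Ω : Type*} [MeasurableSpace Ω] (P : Measure Ω) [IsProbabilityMeasure P]
    {α : Type*} [Fintype α] [MeasurableSpace α] [MeasurableSingletonClass α]
    (Y : ℕ → Ω → α) (hYmeas : ∀ k, Measurable (Y k))
    (hind : Pairwise fun a b => IndepFun (Y a) (Y b) P)
    (hlaw : ∀ k x, P (Y k ⁻¹' {x}) = P (Y 0 ⁻¹' {x}))
    (f : α → ℝ) :
    ∀ᵐ ω ∂P, Tendsto (fun m => (∑ b ∈ Finset.range m, f (Y b ω)) / m) atTop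
      (nhds (∑ x, (P (Y 0 ⁻¹' {x})).toReal * f x)) := by
  have hf : Measurable f := measurable_of_countable f
  set X : ℕ → Ω → ℝ := fun b ω => f (Y b ω) with hX
  have hXmeas : ∀ b, Measurable (X b) := fun b => hf.comp (hYmeas b)
  have hmapeq : ∀ b, Measure.map (Y b) P = Measure.map (Y 0) P := by
    intro b
    refine Measure.ext_of_singleton fun x => ?_
    rw [Measure.map_apply (hYmeas b) (measurableSet_singleton x),
        Measure.map_apply (hYmeas 0) (measurableSet_singleton x)]
    exact hlaw b x
  have hident : ∀ b, IdentDistrib (X b) (X 0) P P := by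
    intro b
    refine ⟨(hXmeas b).aemeasurable, (hXmeas 0).aemeasurable, ?_⟩
    show Measure.map (f ∘ Y b) P = Measure.map (f ∘ Y 0) P
    rw [← Measure.map_map hf (hYmeas b), ← Measure.map_map hf (hYmeas 0), hmapeq b]
  have hprob : IsProbabilityMeasure (Measure.map (Y 0) P) :=
    Measure.isProbabilityMeasure_map (hYmeas 0).aemeasurable
  have hint : Integrable (X 0) P := by
    have h2 : Integrable f (Measure.map (Y 0) P) := Integrable.of_finite
    exact (integrable_map_measure hf.aestronglyMeasurable
      (hYmeas 0).aemeasurable).mp h2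
  have hpair : Pairwise (Function.onFun (IndepFun · · P) X) :=
    fun a b hab => (hind hab).comp hf hf
  have hE : P[X 0] = ∑ x, (P (Y 0 ⁻¹' {x})).toReal * f x := by
    have h1 : P[X 0] = ∫ x, f x ∂(Measure.map (Y 0) P) :=
      (integral_map (hYmeas 0).aemeasurable hf.aestronglyMeasurable).symm
    rw [h1, integral_fintype (f := f) Integrable.of_finite]
    refine Finset.sum_congr rfl fun x _ => ?_
    rw [measureReal_def, Measure.map_apply (hYmeas 0) (measurableSet_singleton x)]
    simp [mul_comm]
  have h3 := strong_law_ae_real X hint hpair hident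
  rw [hE] at h3
  exact h3

/-- Learning rate in the directed circle: under the circular BWR update the
log belief ratio of any false state decays at the asymptotic rate
`(1/n) ∑_j D_KL(ℓ_j(·|θ)‖ℓ_j(·|θc))`, almost surely. -/
theorem directed_cycle_learning
    {n : ℕ} [NeZero n]
    {Θ : Type*} [Fintype Θ]
    (S : Fin n → Type*) [∀ i, Fintype (S i)] [∀ i, MeasurableSpace (S i)]
    [∀ i, MeasurableSingletonClass (S i)]
    (θ : Θ) (ℓ : ∀ i, S i → Θ → ℝ) (hℓ : ∀ i s θh, 0 < ℓ i s θh)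
    (hℓsum : ∀ i θh, ∑ s, ℓ i s θh = 1)
    (ν : Θ → ℝ) (hν : ∀ θh, 0 < ν θh) (hνsum : ∑ θh, ν θh = 1)
    {Ω : Type*} [MeasurableSpace Ω] (P : Measure Ω) [IsProbabilityMeasure P]
    (s : ∀ p : ℕ × Fin n, Ω → S p.2) (hmeas : ∀ p, Measurable (s p))
    (hindep : iIndepFun s P)
    (hlaw : ∀ (t : ℕ) (i : Fin n) (x : S i),
      P (s (t, i) ⁻¹' {x}) = ENNReal.ofReal (ℓ i x θ))
    (μ : ℕ → Fin n → Ω → Θ → ℝ)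
    (h0 : ∀ i ω θh, μ 0 i ω θh =
      ν θh * ℓ i (s (0, i) ω) θh / ∑ θt, ν θt * ℓ i (s (0, i) ω) θt)
    (hstep : ∀ t i ω θh, μ (t + 1) i ω θh =
      μ t (i - 1) ω θh * ℓ i (s (t + 1, i) ω) θh /
        ∑ θt, μ t (i - 1) ω θt * ℓ i (s (t + 1, i) ω) θt)
    (hglobal : ∀ θc : Θ, θc ≠ θ →
      0 < ∑ j, ∑ x, ℓ j x θ * Real.log (ℓ j x θ / ℓ j x θc)) :
    ∀ i : Fin n,
      ∀ᵐ ω ∂P, Tendsto (fun t => μ t i ω θ) atTop (nhds 1) := by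
  classical
  haveI : Nonempty Θ := ⟨θ⟩
  have hn : 0 < n := Nat.pos_of_ne_zero (NeZero.ne n)
  intro i
  -- expected log-likelihood-ratio increments
  set E : Fin n → Θ → ℝ := fun j θc =>
    ∑ x, ℓ j x θ * (Real.log (ℓ j x θc) - Real.log (ℓ j x θ)) with hE
  have hEsum : ∀ θc, θc ≠ θ → ∑ j, E j θc < 0 := by
    intro θc hθc
    have h1 : ∀ j : Fin n, E j θc
        = -(∑ x, ℓ j x θ * Real.log (ℓ j x θ / ℓ j x θc)) := by
      intro j
      rw [hE, ← Finset.sum_neg_distrib]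
      refine Finset.sum_congr rfl fun x _ => ?_
      rw [Real.log_div (hℓ j x θ).ne' (hℓ j x θc).ne']
      ring
    simp only [h1, Finset.sum_neg_distrib]
    exact neg_lt_zero.mpr (hglobal θc hθc)
  -- strong law of large numbers for each agent / offset / false state
  have hslln : ∀ (j : Fin n) (d : ℕ) (θc : Θ), ∀ᵐ ω ∂P,
      Tendsto (fun m : ℕ =>
        (∑ b ∈ Finset.range m,
          (Real.log (ℓ j (s (b * n + d, j) ω) θc)
            - Real.log (ℓ j (s (b * n + d, j) ω) θ))) / m)
        atTop (nhds (E j θc)) := by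
    intro j d θc
    have hpair : Pairwise fun a b => IndepFun (s (a * n + d, j)) (s (b * n + d, j)) P := by
      intro a b hab
      refine hindep.indepFun fun h => hab ?_
      have h1 : a * n + d = b * n + d := congrArg Prod.fst h
      have h2 : a * n = b * n := by omega
      exact Nat.eq_of_mul_eq_mul_right hn h2
    have hlaw' : ∀ k x, P (s (k * n + d, j) ⁻¹' {x}) = P (s (0 * n + d, j) ⁻¹' {x}) := by
      intro k x; rw [hlaw, hlaw]
    have h3 := aux_slln P (α := S j) (fun b => s (b * n + d, j)) (fun b => hmeas _) hpair hlaw'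
      (fun x => Real.log (ℓ j x θc) - Real.log (ℓ j x θ))
    have hEq : (∑ x : S j, (P (s (0 * n + d, j) ⁻¹' {x})).toReal *
        (Real.log (ℓ j x θc) - Real.log (ℓ j x θ))) = E j θc := by
      refine Finset.sum_congr rfl fun x _ => ?_
      rw [hlaw, ENNReal.toReal_ofReal (hℓ j x θ).le]
    rw [hEq] at h3
    exact h3
  have hgood : ∀ᵐ ω ∂P, ∀ (j : Fin n) (d : ℕ) (θc : Θ),
      Tendsto (fun m : ℕ =>
        (∑ b ∈ Finset.range m,
          (Real.log (ℓ j (s (b * n + d, j) ω) θc)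
            - Real.log (ℓ j (s (b * n + d, j) ω) θ))) / m)
        atTop (nhds (E j θc)) := by
    rw [ae_all_iff]; intro j
    rw [ae_all_iff]; intro d
    rw [ae_all_iff]; intro θc
    exact hslln j d θc
  -- closed form for the beliefs
  set a : ℕ → Fin n → ℕ → Fin n := fun t j k => j + (k : Fin n) - (t : Fin n) with ha
  set Q : ℕ → Fin n → Ω → Θ → ℝ := fun t j ω θh =>
    ν θh * ∏ k ∈ Finset.range (t + 1), ℓ (a t j k) (s (k, a t j k) ω) θh with hQ
  have hQpos : ∀ t j ω θh, 0 < Q t j ω θh := fun t j ω θh =>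
    mul_pos (hν θh) (Finset.prod_pos fun k _ => hℓ _ _ _)
  have hQsum : ∀ t j ω, 0 < ∑ θt, Q t j ω θt := fun t j ω =>
    Finset.sum_pos (fun θt _ => hQpos t j ω θt) Finset.univ_nonempty
  have hclosed : ∀ t (j : Fin n) ω θh, μ t j ω θh = Q t j ω θh / ∑ θt, Q t j ω θt := by
    intro t
    induction t with
    | zero =>
      intro j ω θh
      have ha0 : a 0 j 0 = j := by simp [ha]
      rw [h0]
      simp only [hQ, zero_add, Finset.prod_range_one]
      rw [ha0]
    | succ t ih =>
      intro j ω θh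
      have hkey : ∀ θt, Q (t + 1) j ω θt = Q t (j - 1) ω θt * ℓ j (s (t + 1, j) ω) θt := by
        intro θt
        have ha1 : a (t + 1) j (t + 1) = j := by
          simp only [ha]; push_cast; ring
        have ha2 : ∀ k, a (t + 1) j k = a t (j - 1) k := by
          intro k; simp only [ha]; push_cast; ring
        simp only [hQ]
        rw [Finset.prod_range_succ, ha1, ← mul_assoc]
        congr 1
        congr 1
        exact Finset.prod_congr rfl fun k _ => by rw [ha2 k]
      rw [hstep]
      simp only [ih, hkey]
      have hZ0 : (∑ θt, Q t (j - 1) ω θt) ≠ 0 := (hQsum t (j - 1) ω).ne'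
      have hden : (0:ℝ) < ∑ θt, Q t (j - 1) ω θt * ℓ j (s (t + 1, j) ω) θt :=
        Finset.sum_pos (fun θt _ => mul_pos (hQpos t (j-1) ω θt) (hℓ _ _ _))
          Finset.univ_nonempty
      have hsum : ∑ θt, Q t (j - 1) ω θt / (∑ θt, Q t (j - 1) ω θt) * ℓ j (s (t + 1, j) ω) θt
          = (∑ θt, Q t (j - 1) ω θt * ℓ j (s (t + 1, j) ω) θt) / (∑ θt, Q t (j - 1) ω θt) := by
        rw [Finset.sum_div]
        exact Finset.sum_congr rfl fun θt _ => by ring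
      have hfin : ∀ x y z : ℝ, z ≠ 0 → x / z / (y / z) = x / y := by
        intro x y z hz
        rw [div_div_div_comm, div_self hz, div_one]
      rw [hsum, div_mul_eq_mul_div, hfin _ _ _ hZ0]
    -- now fix a good sample point
  filter_upwards [hgood] with ω hω
  have hratio : ∀ θc, θc ≠ θ →
      Tendsto (fun t => Q t i ω θc / Q t i ω θ) atTop (nhds 0) := by
    intro θc hθc
    have hform : ∀ t, Q t i ω θc / Q t i ω θ = ν θc / ν θ *
        Real.exp (∑ k ∈ Finset.range (t + 1),
          (Real.log (ℓ (a t i k) (s (k, a t i k) ω) θc)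
            - Real.log (ℓ (a t i k) (s (k, a t i k) ω) θ))) := by
      intro t
      rw [Real.exp_sum]
      simp only [hQ]
      rw [mul_div_mul_comm, ← Finset.prod_div_distrib]
      congr 1
      refine Finset.prod_congr rfl fun k _ => ?_
      rw [Real.exp_sub, Real.exp_log (hℓ _ _ _), Real.exp_log (hℓ _ _ _)]
    have hexp : Tendsto (fun t => Real.exp (∑ k ∈ Finset.range (t + 1),
        (Real.log (ℓ (a t i k) (s (k, a t i k) ω) θc)
          - Real.log (ℓ (a t i k) (s (k, a t i k) ω) θ)))) atTop (nhds 0) := by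
      apply aux_tendsto_residues hn
      intro r
      have hcast : ∀ m k : ℕ, a (m * n + (r : ℕ)) i k = a (r : ℕ) i k := by
        intro m k
        have hc0 : ((m * n + (r : ℕ) : ℕ) : Fin n) = ((r : ℕ) : Fin n) := by
          push_cast [Fin.natCast_self]
          ring
        simp only [ha, hc0]
      set g : ℕ → ℝ := fun k =>
        Real.log (ℓ (a (r : ℕ) i k) (s (k, a (r : ℕ) i k) ω) θc)
          - Real.log (ℓ (a (r : ℕ) i k) (s (k, a (r : ℕ) i k) ω) θ) with hg
      have hper : ∀ b d : ℕ, a (r : ℕ) i (b * n + d) = a (r : ℕ) i d := by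
        intro b d
        have hc0 : ((b * n + d : ℕ) : Fin n) = ((d : ℕ) : Fin n) := by
          push_cast [Fin.natCast_self]
          ring
        simp only [ha, hc0]
      have hterm : ∀ d : ℕ, Tendsto (fun m => (∑ b ∈ Finset.range m, g (b * n + d)) / m)
          atTop (nhds (E (a (r : ℕ) i d) θc)) := by
        intro d
        refine (hω (a (r : ℕ) i d) d θc).congr fun m => ?_
        congr 1
        refine Finset.sum_congr rfl fun b _ => ?_
        simp only [hg]
        rw [hper b d]
      have hV : Tendsto (fun m => ∑ k ∈ Finset.range (m * n), g k) atTop atBot := by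
        have hsum2 : Tendsto (fun m => (∑ k ∈ Finset.range (m * n), g k) / m) atTop
            (nhds (∑ d ∈ Finset.range n, E (a (r : ℕ) i d) θc)) := by
          have h4 := tendsto_finset_sum (Finset.range n) fun d _ => hterm d
          refine h4.congr fun m => ?_
          rw [aux_sum_range_mul g n m, Finset.sum_div]
        have hlim_eq : ∑ d ∈ Finset.range n, E (a (r : ℕ) i d) θc = ∑ j, E j θc := by
          rw [Finset.sum_range]
          refine Fintype.sum_equiv (Equiv.addRight (i - ((r : ℕ) : Fin n))) _ _ fun d => ?_
          have hd : a ((r : ℕ)) i ((d : ℕ)) = (Equiv.addRight (i - ((r : ℕ) : Fin n))) d := by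
            simp only [ha, Equiv.coe_addRight, Fin.cast_val_eq_self]
            ring
          rw [hd]
        rw [hlim_eq] at hsum2
        have hneg := hEsum θc hθc
        have hmul := Filter.Tendsto.neg_mul_atTop hneg hsum2 tendsto_natCast_atTop_atTop
        refine hmul.congr' ?_
        filter_upwards [eventually_ge_atTop 1] with m hm
        have hm0 : (m : ℝ) ≠ 0 := Nat.cast_ne_zero.mpr (by omega)
        field_simp
      set C : ℝ := ∑ j, ∑ x, (|Real.log (ℓ j x θc)| + |Real.log (ℓ j x θ)|) with hC
      have hC0 : 0 ≤ C := Finset.sum_nonneg fun j _ => Finset.sum_nonneg fun x _ => by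
        positivity
      have hCk : ∀ k, g k ≤ C := by
        intro k
        have h5 : g k ≤ |Real.log (ℓ (a (r : ℕ) i k) (s (k, a (r : ℕ) i k) ω) θc)|
            + |Real.log (ℓ (a (r : ℕ) i k) (s (k, a (r : ℕ) i k) ω) θ)| := by
          simp only [hg]
          exact (le_abs_self _).trans (abs_sub _ _)
        refine h5.trans ?_
        have h6 : (|Real.log (ℓ (a (r : ℕ) i k) (s (k, a (r : ℕ) i k) ω) θc)|
              + |Real.log (ℓ (a (r : ℕ) i k) (s (k, a (r : ℕ) i k) ω) θ)|)
            ≤ ∑ x, (|Real.log (ℓ (a (r : ℕ) i k) x θc)| + |Real.log (ℓ (a (r : ℕ) i k) x θ)|) :=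
          Finset.single_le_sum (f := fun x => |Real.log (ℓ (a (r : ℕ) i k) x θc)|
            + |Real.log (ℓ (a (r : ℕ) i k) x θ)|)
            (fun x _ => by positivity) (Finset.mem_univ _)
        refine h6.trans ?_
        exact Finset.single_le_sum
          (f := fun j => ∑ x, (|Real.log (ℓ j x θc)| + |Real.log (ℓ j x θ)|))
          (fun j _ => Finset.sum_nonneg fun x _ => by positivity) (Finset.mem_univ _)
      have hbound : ∀ m, (∑ k ∈ Finset.range (m * n + ((r : ℕ) + 1)), g k)
          ≤ (∑ k ∈ Finset.range (m * n), g k) + (n : ℝ) * C := by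
        intro m
        rw [Finset.sum_range_add]
        refine add_le_add_right ?_ _
        calc ∑ jj ∈ Finset.range ((r : ℕ) + 1), g (m * n + jj)
            ≤ ∑ _jj ∈ Finset.range ((r : ℕ) + 1), C :=
              Finset.sum_le_sum fun jj _ => hCk _
          _ = (((r : ℕ) : ℝ) + 1) * C := by
              rw [Finset.sum_const, Finset.card_range]
              push_cast
              ring
          _ ≤ (n : ℝ) * C := by
              refine mul_le_mul_of_nonneg_right ?_ hC0
              exact_mod_cast Nat.succ_le_of_lt r.2
      have hW : Tendsto (fun m => ∑ k ∈ Finset.range (m * n + ((r : ℕ) + 1)), g k)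
          atTop atBot :=
        tendsto_atBot_mono hbound (tendsto_atBot_add_const_right _ ((n : ℝ) * C) hV)
      have hWexp := Real.tendsto_exp_atBot.comp hW
      refine Filter.Tendsto.congr (fun m => ?_) hWexp
      show Real.exp (∑ k ∈ Finset.range (m * n + ((r : ℕ) + 1)), g k) = _
      rw [show m * n + ((r : ℕ) + 1) = m * n + (r : ℕ) + 1 from (add_assoc _ _ _).symm]
      congr 1
      refine Finset.sum_congr rfl fun k _ => ?_
      simp only [hg]
      rw [hcast m k]
    have h7 := hexp.const_mul (ν θc / ν θ)
    rw [mul_zero] at h7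
    exact Filter.Tendsto.congr (fun t => (hform t).symm) h7
  have hμeq : ∀ t, μ t i ω θ
      = (1 + ∑ θc ∈ Finset.univ.erase θ, Q t i ω θc / Q t i ω θ)⁻¹ := by
    intro t
    rw [hclosed]
    have h1 : (∑ θt, Q t i ω θt) / Q t i ω θ
        = 1 + ∑ θc ∈ Finset.univ.erase θ, Q t i ω θc / Q t i ω θ := by
      rw [Finset.sum_div, ← Finset.add_sum_erase _ _ (Finset.mem_univ θ),
        div_self (hQpos t i ω θ).ne']
    rw [← h1, inv_div]
  have hsum0 : Tendsto (fun t => ∑ θc ∈ Finset.univ.erase θ, Q t i ω θc / Q t i ω θ)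
      atTop (nhds 0) := by
    have h8 := tendsto_finset_sum (Finset.univ.erase θ)
      (fun θc hθc => hratio θc (Finset.ne_of_mem_erase hθc))
    simpa using h8
  have hone : Tendsto (fun _ : ℕ => (1 : ℝ)) atTop (nhds 1) := tendsto_const_nhds
  have hfinal := (hone.add hsum0).inv₀ (by norm_num)
  rw [show ((1 : ℝ) + 0)⁻¹ = 1 by norm_num] at hfinal
  exact Filter.Tendsto.congr (fun t => (hμeq t).symm) hfinal
end

section
/- Let Θ and all S_i be finite, priors ν_i full support, likelihoods strictly positive. The time-one Bayesian belief of agent i given her own signal s_{i,0} and her neighbors' time-zero Bayesian beliefs μ_{j,0}(·) (each formed via Bayes rule from ν_j and signal s_{j,0}) satisfies: μ_{i,1}(θ̂) = ν_i(θ̂)ℓ_i(s_{i,0}|θ̂)·∏_{j∈N(i)} (μ_{j,0}(θ̂)/ν_j(θ̂)) / ∑_{θ̃∈Θ} ν_i(θ̃)ℓ_i(s_{i,0}|θ̃)·∏_{j∈N(i)} (μ_{j,0}(θ̃)/ν_j(θ̃)), provided the signals s_{j,0}, j ∈ N(i), and s_{i,0} are mutually independent conditional on each θ̃ and the map from signals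 to time-zero beliefs is measurable with the observed beliefs revealing exactly the event {s_{j,0} ∈ I_j(μ_{j,0})}, where I_j(π) is the set of signals producing posterior π. -/
open Finset

/-- Lemma 2 (time-one Bayesian beliefs): the Bayesian posterior of agent `i`
who observes her own private signal and her neighbors' time-zero Bayes
posteriors (each formed from the neighbor's prior and conditionally
independent private signal, the observed posterior revealing exactly the set
`I_j` of signals producing it) is the log-linear combination in which each
neighbor's posterior is divided by that neighbor's prior.  The left-hand side
is the exact Bayesian conditional probability, computed by summing the joint
likelihood over all signal profiles consistent with the observed beliefs. -/
theorem time_one_bayesian_beliefs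
    {Θ : Type*} [Fintype Θ] [DecidableEq Θ]
    {n : ℕ} (N : Finset (Fin n))
    (S : Fin n → Type*) [∀ j, Fintype (S j)] [∀ j, DecidableEq (S j)]
    (Si : Type*) [Fintype Si]
    (ℓ : ∀ j, S j → Θ → ℝ) (hℓ : ∀ j s θh, 0 < ℓ j s θh)
    (ℓi : Si → Θ → ℝ) (hℓi : ∀ s θh, 0 < ℓi s θh)
    (ν : Fin n → Θ → ℝ) (hν : ∀ j θh, 0 < ν j θh)
    (νi : Θ → ℝ) (hνi : ∀ θh, 0 < νi θh)
    (sig : ∀ j, S j) (si : Si)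
    -- the neighbors' time-zero Bayesian posteriors
    (μ0 : Fin n → Θ → ℝ)
    (hμ0 : ∀ j θh, μ0 j θh =
      ν j θh * ℓ j (sig j) θh / ∑ θt, ν j θt * ℓ j (sig j) θt)
    -- the sets of signals consistent with the observed posteriors
    (I : ∀ j, Finset (S j))
    (hI : ∀ j, I j = Finset.univ.filter (fun s =>
      ∀ θh, μ0 j θh = ν j θh * ℓ j s θh / ∑ θt, ν j θt * ℓ j s θt)) :
    ∀ θh : Θ,
      (νi θh * ℓi si θh * ∏ j ∈ N, ∑ s ∈ I j, ℓ j s θh) /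
          (∑ θt, νi θt * ℓi si θt * ∏ j ∈ N, ∑ s ∈ I j, ℓ j s θt)
        =
      (νi θh * ℓi si θh * ∏ j ∈ N, (μ0 j θh / ν j θh)) /
          (∑ θt, νi θt * ℓi si θt * ∏ j ∈ N, (μ0 j θt / ν j θt)) := by
  intro θh
  have hΘ : Nonempty Θ := ⟨θh⟩
  -- Z j s : normalizing constant, positive
  set Z : ∀ j, S j → ℝ := fun j s => ∑ θt, ν j θt * ℓ j s θt with hZ
  have hZpos : ∀ j s, 0 < Z j s := fun j s =>
    Finset.sum_pos (fun θ _ => mul_pos (hν j θ) (hℓ j s θ)) univ_nonempty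
  -- c j : total mass of signals in I j
  set c : Fin n → ℝ := fun j => ∑ s ∈ I j, Z j s with hc
  have hsig : ∀ j, sig j ∈ I j := by
    intro j; rw [hI j]; simp only [mem_filter, mem_univ, true_and]
    exact fun θ => hμ0 j θ
  have hcpos : ∀ j, 0 < c j := fun j =>
    Finset.sum_pos' (fun s _ => (hZpos j s).le) ⟨sig j, hsig j, hZpos j (sig j)⟩
  -- key: ∑ s ∈ I j, ℓ j s θ = (μ0 j θ / ν j θ) * c j
  have key : ∀ j θ, ∑ s ∈ I j, ℓ j s θ = (μ0 j θ / ν j θ) * c j := by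
    intro j θ
    rw [hc, Finset.mul_sum]
    apply Finset.sum_congr rfl
    intro s hs
    rw [hI j] at hs
    simp only [mem_filter, mem_univ, true_and] at hs
    have h := hs θ
    field_simp [(hν j θ).ne', (hZpos j s).ne'] at h ⊢
    have h' : μ0 j θ * Z j s = ν j θ * ℓ j s θ := by
      rw [hs θ]; exact div_mul_cancel₀ _ (hZpos j s).ne'
    linarith [h, h']
  have prodkey : ∀ θ, ∏ j ∈ N, ∑ s ∈ I j, ℓ j s θ =
      (∏ j ∈ N, (μ0 j θ / ν j θ)) * ∏ j ∈ N, c j := by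
    intro θ
    rw [← Finset.prod_mul_distrib]
    exact Finset.prod_congr rfl fun j _ => key j θ
  have hC : 0 < ∏ j ∈ N, c j := Finset.prod_pos fun j _ => hcpos j
  simp only [prodkey, ← mul_assoc]
  rw [← Finset.sum_mul, mul_div_mul_right _ _ hC.ne']
end
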